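/- Let A ∈ ℝ^{m×m} be positive definite, meaning xᵀAx > 0 for every nonzero x ∈ ℝ^m (A need not be symmetric), let B ∈ ℝ^{m×n} have full column rank (rank B = n), and let α ≥ 0, β > 0. Let m₀, M₀, s₀ ∈ ℝ with m₀ > 0 and s₀ ≥ 0 be such that for every nonzero u ∈ ℂ^m, m₀·(u*u) ≤ Re(u*Au) ≤ M₀·(u*u) and |Im(u*Au)| ≤ s₀·(u*u) (such constants are provided by the smallest and largest eigenvalues of the symmetric part H = (A+Aᵀ)/2 and the spectral radius of the skew-symmetric part S = (A−Aᵀ)/2). Suppose λ ∈ ℂ and w = (u, v) ∈ ℂ^{m+n} is nonzero with 𝒜w = λ P(α,β)w and Bᵀu = 0. Then m₀(α + 2m₀)/((α + 2M₀)² + 4s₀²) ≤ Re(λ) ≤ (M₀(α + 2M₀) + 2s₀²)/(α + 2m₀)², and |Im(λ)| ≤ α·s₀/(α + 2m₀)². -/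

import Mathlib

open Matrix

/-- The MGSSP splitting matrix `P(α,β) = [[αI+2A, 2B], [−2Bᵀ, βI]]`. -/
noncomputable def Pmat {m n : ℕ} (A : Matrix (Fin m) (Fin m) ℝ) (B : Matrix (Fin m) (Fin n) ℝ)
    (α β : ℝ) : Matrix (Fin m ⊕ Fin n) (Fin m ⊕ Fin n) ℝ :=
  fromBlocks (α • 1 + (2 : ℝ) • A) ((2 : ℝ) • B) (-((2 : ℝ) • Bᵀ)) (β • 1)

/-- The MGSSP splitting matrix `Q(α,β) = [[αI+A, B], [−Bᵀ, βI]]`. -/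
noncomputable def Qmat {m n : ℕ} (A : Matrix (Fin m) (Fin m) ℝ) (B : Matrix (Fin m) (Fin n) ℝ)
    (α β : ℝ) : Matrix (Fin m ⊕ Fin n) (Fin m ⊕ Fin n) ℝ :=
  fromBlocks (α • 1 + A) B (-Bᵀ) (β • 1)

/-- The saddle point matrix `𝒜 = [[A, B], [−Bᵀ, 0]]`. -/
noncomputable def Amat {m n : ℕ} (A : Matrix (Fin m) (Fin m) ℝ) (B : Matrix (Fin m) (Fin n) ℝ) :
    Matrix (Fin m ⊕ Fin n) (Fin m ⊕ Fin n) ℝ :=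
  fromBlocks A B (-Bᵀ) 0

lemma aux_mulVec_inj {m n : ℕ} (B : Matrix (Fin m) (Fin n) ℝ) (hB : B.rank = n) :
    Function.Injective B.mulVec := by
  have h := LinearMap.finrank_range_add_finrank_ker B.mulVecLin
  rw [show Module.finrank ℝ (LinearMap.range B.mulVecLin) = B.rank from rfl, hB,
    Module.finrank_pi] at h
  have hker : LinearMap.ker B.mulVecLin = ⊥ :=
    Submodule.finrank_eq_zero.mp (by simpa using h)
  have := LinearMap.ker_eq_bot.mp hker
  simpa [Function.Injective, Matrix.mulVecLin_apply] using this

lemma aux_dot_self {m : ℕ} (u : Fin m → ℂ) (hu : u ≠ 0) :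
    (star u ⬝ᵥ u).im = 0 ∧ 0 < (star u ⬝ᵥ u).re := by
  have hp : star u ⬝ᵥ u = ((∑ i, Complex.normSq (u i) : ℝ) : ℂ) := by
    push_cast
    simp [dotProduct, Complex.normSq_eq_conj_mul_self]
  constructor
  · rw [hp]; simp
  · rw [hp]
    simp only [Complex.ofReal_re]
    obtain ⟨i, hi⟩ := Function.ne_iff.mp hu
    exact Finset.sum_pos' (fun j _ => Complex.normSq_nonneg _)
      ⟨i, Finset.mem_univ i, by simpa [Complex.normSq_pos] using hi⟩

lemma aux_star_mulVec {m n : ℕ} (M : Matrix (Fin n) (Fin m) ℝ) (u : Fin m → ℂ) :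
    (M.map Complex.ofReal) *ᵥ star u = star ((M.map Complex.ofReal) *ᵥ u) := by
  funext i
  simp [Matrix.mulVec, dotProduct, map_sum, Complex.conj_ofReal]

lemma aux_complex_mulVec_zero {m n : ℕ} (B : Matrix (Fin m) (Fin n) ℝ)
    (hBinj : Function.Injective B.mulVec)
    (v : Fin n → ℂ) (h : (B.map Complex.ofReal) *ᵥ v = 0) : v = 0 := by
  have hre : B *ᵥ (fun j => (v j).re) = 0 := by
    funext i
    have := congrArg Complex.re (congrFun h i)
    simpa [Matrix.mulVec, dotProduct, Complex.re_sum, Complex.re_ofReal_mul] using this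
  have him : B *ᵥ (fun j => (v j).im) = 0 := by
    funext i
    have := congrArg Complex.im (congrFun h i)
    simpa [Matrix.mulVec, dotProduct, Complex.im_sum, Complex.im_ofReal_mul] using this
  have h1 : (fun j => (v j).re) = 0 := hBinj (by simpa using hre)
  have h2 : (fun j => (v j).im) = 0 := hBinj (by simpa using him)
  funext j
  exact Complex.ext (congrFun h1 j) (congrFun h2 j)

set_option maxHeartbeats 1600000 in
theorem mgssp_precond_eigenvalue_bounds_of_BTu_eq_zero {m n : ℕ}
    (A : Matrix (Fin m) (Fin m) ℝ) (B : Matrix (Fin m) (Fin n) ℝ)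
    (hA : ∀ x : Fin m → ℝ, x ≠ 0 → 0 < x ⬝ᵥ (A *ᵥ x))
    (hB : B.rank = n)
    (α β : ℝ) (hα : 0 ≤ α) (hβ : 0 < β)
    (m₀ M₀ s₀ : ℝ) (hm₀ : 0 < m₀) (hs₀ : 0 ≤ s₀)
    (hRe : ∀ u : Fin m → ℂ, u ≠ 0 →
        m₀ * (star u ⬝ᵥ u).re ≤ (star u ⬝ᵥ (A.map Complex.ofReal *ᵥ u)).re ∧
        (star u ⬝ᵥ (A.map Complex.ofReal *ᵥ u)).re ≤ M₀ * (star u ⬝ᵥ u).re)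
    (hIm : ∀ u : Fin m → ℂ, u ≠ 0 →
        |(star u ⬝ᵥ (A.map Complex.ofReal *ᵥ u)).im| ≤ s₀ * (star u ⬝ᵥ u).re)
    (lam : ℂ) (u : Fin m → ℂ) (v : Fin n → ℂ) (hw : Sum.elim u v ≠ 0)
    (heig : (Amat A B).map Complex.ofReal *ᵥ Sum.elim u v
        = lam • ((Pmat A B α β).map Complex.ofReal *ᵥ Sum.elim u v))
    (hBTu : Bᵀ.map Complex.ofReal *ᵥ u = 0) :
    (m₀ * (α + 2 * m₀) / ((α + 2 * M₀) ^ 2 + 4 * s₀ ^ 2) ≤ lam.re ∧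
        lam.re ≤ (M₀ * (α + 2 * M₀) + 2 * s₀ ^ 2) / (α + 2 * m₀) ^ 2) ∧
      |lam.im| ≤ α * s₀ / (α + 2 * m₀) ^ 2 := by
  classical
  set AC : Matrix (Fin m) (Fin m) ℂ := A.map Complex.ofReal with hACdef
  set BC : Matrix (Fin m) (Fin n) ℂ := B.map Complex.ofReal with hBCdef
  have hBTu' : BCᵀ *ᵥ u = 0 := hBTu
  have hAmap : (Amat A B).map Complex.ofReal = fromBlocks AC BC (-(BCᵀ)) 0 := by
    ext (i|i) (j|j) <;> simp [Amat, hACdef, hBCdef]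
  have hPmap : (Pmat A B α β).map Complex.ofReal
      = fromBlocks ((α:ℂ) • 1 + (2:ℂ) • AC) ((2:ℂ) • BC) (-((2:ℂ) • BCᵀ)) ((β:ℂ) • 1) := by
    ext (i|i) (j|j) <;> simp [Pmat, hACdef, hBCdef, Matrix.one_apply, apply_ite Complex.ofReal]
  rw [hAmap, hPmap, fromBlocks_mulVec, fromBlocks_mulVec] at heig
  have e1 : AC *ᵥ u + BC *ᵥ v
      = lam • (((α:ℂ) • 1 + (2:ℂ) • AC) *ᵥ u + ((2:ℂ) • BC) *ᵥ v) :=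
    funext fun i => congrFun heig (Sum.inl i)
  have e2 : (-(BCᵀ)) *ᵥ u + (0 : Matrix (Fin n) (Fin n) ℂ) *ᵥ v
      = lam • ((-((2:ℂ) • BCᵀ)) *ᵥ u + ((β:ℂ) • 1) *ᵥ v) :=
    funext fun j => congrFun heig (Sum.inr j)
  have e1' : AC *ᵥ u + BC *ᵥ v
      = lam • ((α:ℂ) • u + (2:ℂ) • (AC *ᵥ u) + (2:ℂ) • (BC *ᵥ v)) := by
    simpa [Matrix.add_mulVec, smul_mulVec, one_mulVec, add_assoc] using e1
  have e2' : lam • ((β:ℂ) • v) = 0 := by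
    have h := e2
    simp [Matrix.neg_mulVec, hBTu', smul_mulVec, one_mulVec, Matrix.zero_mulVec] at h
    exact h.symm
  have hBinj := aux_mulVec_inj B hB
  -- orthogonality: star u ⬝ᵥ BC *ᵥ v = 0
  have horth : star u ⬝ᵥ (BC *ᵥ v) = 0 := by
    rw [Matrix.dotProduct_mulVec, ← Matrix.mulVec_transpose]
    have h2 : BCᵀ *ᵥ star u = 0 := by
      have h3 := aux_star_mulVec Bᵀ u
      rw [show (Bᵀ.map Complex.ofReal) = BCᵀ from rfl] at h3
      rw [h3, hBTu', star_zero]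
    rw [h2, zero_dotProduct]
  rcases eq_or_ne lam 0 with hl | hl
  · -- lam = 0 : contradiction
    exfalso
    subst hl
    rw [zero_smul] at e1'
    have hu0 : u = 0 := by
      by_contra hu
      obtain ⟨him, ht⟩ := aux_dot_self u hu
      have hq0 : star u ⬝ᵥ (AC *ᵥ u) = 0 := by
        have h := congrArg (fun x => star u ⬝ᵥ x) e1'
        simpa [dotProduct_add, horth] using h
      have h1 := (hRe u hu).1
      rw [hq0] at h1
      simp only [Complex.zero_re] at h1
      nlinarith
    subst hu0
    have hBv : BC *ᵥ v = 0 := by simpa using e1'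
    have hv0 : v = 0 := aux_complex_mulVec_zero B hBinj v hBv
    subst hv0
    exact hw (by funext x; cases x <;> rfl)
  · -- lam ≠ 0
    have hv0 : v = 0 := by
      rcases smul_eq_zero.mp e2' with h | h
      · exact absurd h hl
      · rcases smul_eq_zero.mp h with h' | h'
        · exact absurd h' (by exact_mod_cast hβ.ne')
        · exact h'
    subst hv0
    have hu : u ≠ 0 := by
      intro h
      exact hw (by funext x; cases x <;> simp [h])
    have e1'' : AC *ᵥ u = lam • ((α:ℂ) • u + (2:ℂ) • (AC *ᵥ u)) := by
      simpa using e1'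
    obtain ⟨him, ht⟩ := aux_dot_self u hu
    set t := (star u ⬝ᵥ u).re with htdef
    have hpt : star u ⬝ᵥ u = (t:ℂ) := Complex.ext rfl (by simpa using him)
    clear heig hAmap hPmap e1 e2 e2' horth
    have hq : star u ⬝ᵥ (AC *ᵥ u)
        = lam * (((α * t : ℝ):ℂ) + 2 * (star u ⬝ᵥ (AC *ᵥ u))) := by
      have h := congrArg (fun x => star u ⬝ᵥ x) e1''
      simp only [dotProduct_smul, dotProduct_add, smul_eq_mul] at h
      rw [hpt] at h
      push_cast
      linear_combination h
    set a := (star u ⬝ᵥ (AC *ᵥ u)).re with hadef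
    set b := (star u ⬝ᵥ (AC *ᵥ u)).im with hbdef
    have h1 := congrArg Complex.re hq
    have h2 := congrArg Complex.im hq
    simp only [Complex.mul_re, Complex.mul_im, Complex.add_re, Complex.add_im,
      Complex.ofReal_re, Complex.ofReal_im, Complex.re_ofNat, Complex.im_ofNat,
      mul_zero, zero_mul, sub_zero, add_zero, zero_add] at h1 h2
    have hD1 : lam.re * ((α*t+2*a)^2 + 4*b^2) = a*(α*t+2*a) + 2*b^2 := by
      linear_combination (-(α*t+2*a)) * h1 + (-(2*b)) * h2
    have hD2 : lam.im * ((α*t+2*a)^2 + 4*b^2) = α*t*b := by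
      linear_combination (2*b) * h1 + (-(α*t+2*a)) * h2
    have ha1 : m₀ * t ≤ a := (hRe u hu).1
    have ha2 : a ≤ M₀ * t := (hRe u hu).2
    have hb : |b| ≤ s₀ * t := hIm u hu
    clear hq e1'' e1' h1 h2 hpt hRe hIm him hu hw hBinj hBTu' hBTu hA hB hl
    clear htdef hadef hbdef
    clear_value t a b
    clear u
    have hM0 : m₀ ≤ M₀ := (mul_le_mul_iff_of_pos_right ht).mp (le_trans ha1 ha2)
    have hb2 : b^2 ≤ s₀^2 * t^2 := by
      have h := mul_self_le_mul_self (abs_nonneg b) hb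
      rw [abs_mul_abs_self] at h
      nlinarith
    have hX1 : (α+2*m₀)*t ≤ α*t+2*a := by linarith
    have hX2 : α*t+2*a ≤ (α+2*M₀)*t := by linarith
    have hXpos : 0 < α*t+2*a := by nlinarith [mul_pos hm₀ ht]
    have hDpos : 0 < (α*t+2*a)^2 + 4*b^2 := by positivity
    have hct : 0 < (α+2*m₀)*t := by nlinarith [mul_pos hm₀ ht]
    have hD_lb : (α+2*m₀)^2 * t^2 ≤ (α*t+2*a)^2 + 4*b^2 := by
      have := pow_le_pow_left₀ hct.le hX1 2
      linarith [sq_nonneg b]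
    have hD_ub : (α*t+2*a)^2 + 4*b^2 ≤ ((α+2*M₀)^2 + 4*s₀^2) * t^2 := by
      have := pow_le_pow_left₀ hXpos.le hX2 2
      linarith [hb2]
    have hN_lb : m₀*(α+2*m₀)*t^2 ≤ a*(α*t+2*a) + 2*b^2 := by
      have := mul_le_mul ha1 hX1 hct.le (by nlinarith [mul_pos hm₀ ht] : (0:ℝ) ≤ a)
      linarith [sq_nonneg b]
    have hN_ub : a*(α*t+2*a) + 2*b^2 ≤ (M₀*(α+2*M₀) + 2*s₀^2)*t^2 := by
      have := mul_le_mul ha2 hX2 hXpos.le (by nlinarith [mul_pos hm₀ ht] : (0:ℝ) ≤ M₀*t)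
      linarith [hb2]
    have hc2pos : 0 < (α+2*M₀)^2 + 4*s₀^2 := by
      have : 0 < α + 2*M₀ := by linarith
      positivity
    have hcmpos : 0 < (α+2*m₀)^2 := by positivity
    have ht2 : (0:ℝ) < t^2 := by positivity
    have hlre_eq : lam.re = (a*(α*t+2*a) + 2*b^2) / ((α*t+2*a)^2 + 4*b^2) := by
      rw [eq_div_iff hDpos.ne']
      linarith [hD1]
    refine ⟨⟨?_, ?_⟩, ?_⟩
    · rw [hlre_eq, div_le_div_iff₀ hc2pos hDpos]
      linarith [mul_le_mul_of_nonneg_right hN_lb hc2pos.le,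
        mul_le_mul_of_nonneg_left hD_ub (show (0:ℝ) ≤ m₀*(α+2*m₀) by positivity)]
    · rw [hlre_eq, div_le_div_iff₀ hDpos hcmpos]
      linarith [mul_le_mul_of_nonneg_right hN_ub hcmpos.le,
        mul_le_mul_of_nonneg_left hD_lb (show (0:ℝ) ≤ M₀*(α+2*M₀) + 2*s₀^2 by nlinarith [mul_pos (hm₀.trans_le hM0) (show (0:ℝ) < α+2*M₀ by linarith), sq_nonneg s₀])]
    · rw [le_div_iff₀ hcmpos]
      have habs : |lam.im| * ((α*t+2*a)^2 + 4*b^2) = α * t * |b| := by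
        have h := congrArg abs hD2
        rwa [abs_mul, abs_of_pos hDpos, abs_mul, abs_mul, abs_of_nonneg hα,
          abs_of_nonneg ht.le] at h
      have step1 : |lam.im| * ((α+2*m₀)^2 * t^2) ≤ α*s₀*t^2 := by
        calc |lam.im| * ((α+2*m₀)^2*t^2)
            ≤ |lam.im| * ((α*t+2*a)^2 + 4*b^2) :=
              mul_le_mul_of_nonneg_left hD_lb (abs_nonneg _)
          _ = α*t*|b| := habs
          _ ≤ α*t*(s₀*t) := mul_le_mul_of_nonneg_left hb (by positivity)
          _ = α*s₀*t^2 := by ring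
      have hfin : |lam.im| * (α+2*m₀)^2 * t^2 ≤ (α*s₀) * t^2 := by linarith [step1]
      exact le_of_mul_le_mul_right (by linarith [step1]) ht2
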